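/- Let A be a compact metric space with points (a_i^k)_{1≤i≤k} and weights (Λ_i : [0,1]² → [0,1])_{1≤i≤k} measurable with Σ_{i=1}^k Λ_i(x,y) = 1 for all (x,y), each Λ_i piecewise constant on the grid {[(q−1)/m, q/m)}² for some m dividing n. Then there exists a measurable map α : [0,1]² → A taking values in {a_1^k, …, a_k^k} such that for every continuous φ : A × [0,1]² → ℝ with uniform modulus of continuity w_φ, and every t ∈ [0,1], |∫_0^1 φ(α(s,t), s, t) ds − Σ_{i=1}^k ∫_0^1 φ(a_i^k, s, t) Λ_i(s,t) ds| ≤ w_φ(1/n). -/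

import Mathlib

open MeasureTheory Set

noncomputable def chatS {k : ℕ} (Λ : Fin k → ℝ → ℝ → ℝ) (i : ℕ) (s t : ℝ) : ℝ :=
  ∑ j ∈ Finset.filter (fun j : Fin k => (j : ℕ) < i) Finset.univ, Λ j s t

noncomputable def chatTheta (n : ℕ) (s : ℝ) : ℝ := s * n - ⌊s * n⌋

noncomputable def chatIota (k n : ℕ) (hk : 0 < k) (Λ : Fin k → ℝ → ℝ → ℝ)
    (p : ℝ × ℝ) : Fin k :=
  if h : (Finset.filter (fun i : Fin k => chatTheta n p.1 < chatS Λ ((i : ℕ) + 1) p.1 p.2)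
      Finset.univ).Nonempty
  then (Finset.filter (fun i : Fin k => chatTheta n p.1 < chatS Λ ((i : ℕ) + 1) p.1 p.2)
      Finset.univ).min' h
  else ⟨0, hk⟩

lemma chatTheta_nonneg (n : ℕ) (s : ℝ) : 0 ≤ chatTheta n s :=
  sub_nonneg.2 (Int.floor_le _)

lemma chatTheta_lt_one (n : ℕ) (s : ℝ) : chatTheta n s < 1 := by
  have := Int.lt_floor_add_one (s * n)
  simp only [chatTheta]; linarith

lemma chatS_zero {k : ℕ} (Λ : Fin k → ℝ → ℝ → ℝ) (s t : ℝ) : chatS Λ 0 s t = 0 := by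
  simp [chatS]

lemma chatS_top {k : ℕ} (Λ : Fin k → ℝ → ℝ → ℝ) (hsum : ∀ x y, (∑ i : Fin k, Λ i x y) = 1)
    (s t : ℝ) : chatS Λ k s t = 1 := by
  rw [chatS, Finset.filter_true_of_mem (fun j _ => j.isLt), hsum]

lemma chatS_mono {k : ℕ} (Λ : Fin k → ℝ → ℝ → ℝ)
    (hmem : ∀ i x y, Λ i x y ∈ Set.Icc (0:ℝ) 1) {i i' : ℕ} (h : i ≤ i') (s t : ℝ) :
    chatS Λ i s t ≤ chatS Λ i' s t := by
  apply Finset.sum_le_sum_of_subset_of_nonneg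
  · intro j hj
    simp only [Finset.mem_filter, Finset.mem_univ, true_and] at hj ⊢
    omega
  · intro j _ _
    exact (hmem j s t).1

lemma chatS_succ {k : ℕ} (Λ : Fin k → ℝ → ℝ → ℝ) (i : Fin k) (s t : ℝ) :
    chatS Λ ((i : ℕ) + 1) s t = chatS Λ (i : ℕ) s t + Λ i s t := by
  have h : Finset.filter (fun j : Fin k => (j : ℕ) < (i : ℕ) + 1) Finset.univ
      = insert i (Finset.filter (fun j : Fin k => (j : ℕ) < (i : ℕ)) Finset.univ) := by
    ext j
    simp only [Finset.mem_filter, Finset.mem_univ, true_and, Finset.mem_insert]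
    constructor
    · intro hj
      rcases Nat.lt_succ_iff_lt_or_eq.1 hj with h' | h'
      · exact Or.inr h'
      · exact Or.inl (Fin.ext h')
    · rintro (rfl | h')
      · omega
      · omega
  rw [chatS, h, Finset.sum_insert (by simp), chatS, add_comm]

lemma chat_nonempty {k n : ℕ} (hk : 0 < k) (Λ : Fin k → ℝ → ℝ → ℝ)
    (hsum : ∀ x y, (∑ i : Fin k, Λ i x y) = 1) (p : ℝ × ℝ) :
    (Finset.filter (fun i : Fin k => chatTheta n p.1 < chatS Λ ((i : ℕ) + 1) p.1 p.2)
      Finset.univ).Nonempty := by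
  refine ⟨⟨k - 1, by omega⟩, ?_⟩
  simp only [Finset.mem_filter, Finset.mem_univ, true_and]
  have : k - 1 + 1 = k := by omega
  rw [this, chatS_top Λ hsum]
  exact chatTheta_lt_one n p.1

lemma chatIota_spec {k n : ℕ} (hk : 0 < k) (Λ : Fin k → ℝ → ℝ → ℝ)
    (hmem : ∀ i x y, Λ i x y ∈ Set.Icc (0:ℝ) 1)
    (hsum : ∀ x y, (∑ i : Fin k, Λ i x y) = 1) (p : ℝ × ℝ) (i : Fin k) :
    chatIota k n hk Λ p = i ↔
      chatS Λ (i : ℕ) p.1 p.2 ≤ chatTheta n p.1 ∧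
      chatTheta n p.1 < chatS Λ ((i : ℕ) + 1) p.1 p.2 := by
  have hne := chat_nonempty (n := n) hk Λ hsum p
  rw [chatIota, dif_pos hne]
  constructor
  · intro h
    have h2 := Finset.min'_mem _ hne
    rw [h, Finset.mem_filter] at h2
    refine ⟨?_, h2.2⟩
    by_contra hlt
    push_neg at hlt
    have hi0 : 0 < (i : ℕ) := by
      rcases Nat.eq_zero_or_pos (i : ℕ) with h0 | h0
      · rw [h0, chatS_zero] at hlt
        exact absurd hlt (not_lt.2 (chatTheta_nonneg n p.1))
      · exact h0
    have hj : (⟨(i : ℕ) - 1, by omega⟩ : Fin k) ∈ Finset.filter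
        (fun i : Fin k => chatTheta n p.1 < chatS Λ ((i : ℕ) + 1) p.1 p.2) Finset.univ := by
      rw [Finset.mem_filter]
      refine ⟨Finset.mem_univ _, ?_⟩
      have : (i : ℕ) - 1 + 1 = (i : ℕ) := by omega
      simpa [this] using hlt
    have h3 : (Finset.filter
        (fun i : Fin k => chatTheta n p.1 < chatS Λ ((i : ℕ) + 1) p.1 p.2)
        Finset.univ).min' hne ≤ ⟨(i : ℕ) - 1, by omega⟩ := Finset.min'_le _ _ hj
    have h4 : (i : ℕ) ≤ (i : ℕ) - 1 := (le_of_eq h.symm).trans h3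
    omega
  · rintro ⟨h1, h2⟩
    have hiF : i ∈ Finset.filter
        (fun i : Fin k => chatTheta n p.1 < chatS Λ ((i : ℕ) + 1) p.1 p.2) Finset.univ := by
      rw [Finset.mem_filter]; exact ⟨Finset.mem_univ _, h2⟩
    refine le_antisymm (Finset.min'_le _ _ hiF) ?_
    have hmF := Finset.min'_mem _ hne
    rw [Finset.mem_filter] at hmF
    by_contra hlt
    push_neg at hlt
    have hle : ((Finset.min' _ hne : Fin k) : ℕ) + 1 ≤ (i : ℕ) := hlt
    have := chatS_mono Λ hmem hle p.1 p.2
    linarith [hmF.2]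

lemma chatTheta_measurable (n : ℕ) : Measurable fun p : ℝ × ℝ => chatTheta n p.1 := by
  unfold chatTheta
  exact (measurable_fst.mul_const _).sub
    (measurable_from_top.comp (Int.measurable_floor.comp (measurable_fst.mul_const _)))

lemma chatS_measurable {k : ℕ} (Λ : Fin k → ℝ → ℝ → ℝ)
    (hmeas : ∀ i, Measurable fun p : ℝ × ℝ => Λ i p.1 p.2) (i : ℕ) :
    Measurable fun p : ℝ × ℝ => chatS Λ i p.1 p.2 := by
  unfold chatS
  exact Finset.measurable_sum _ fun j _ => hmeas j

lemma chatIota_measurable {k n : ℕ} (hk : 0 < k) (Λ : Fin k → ℝ → ℝ → ℝ)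
    (hmeas : ∀ i, Measurable fun p : ℝ × ℝ => Λ i p.1 p.2)
    (hmem : ∀ i x y, Λ i x y ∈ Set.Icc (0:ℝ) 1)
    (hsum : ∀ x y, (∑ i : Fin k, Λ i x y) = 1) :
    Measurable (chatIota k n hk Λ) := by
  apply measurable_to_countable'
  intro i
  have : chatIota k n hk Λ ⁻¹' {i} =
      {p : ℝ × ℝ | chatS Λ (i : ℕ) p.1 p.2 ≤ chatTheta n p.1} ∩
      {p : ℝ × ℝ | chatTheta n p.1 < chatS Λ ((i : ℕ) + 1) p.1 p.2} := by
    ext p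
    simp only [mem_preimage, mem_singleton_iff, mem_inter_iff, mem_setOf_eq]
    exact chatIota_spec hk Λ hmem hsum p i
  rw [this]
  exact (measurableSet_le (chatS_measurable Λ hmeas _) (chatTheta_measurable n)).inter
    (measurableSet_lt (chatTheta_measurable n) (chatS_measurable Λ hmeas _))

lemma chat_floor_div {d : ℕ} (hd : 0 < d) (x : ℝ) :
    ⌊x⌋ = ⌊((⌊x * d⌋ : ℤ) : ℝ) / d⌋ := by
  have hd' : (0:ℝ) < d := by exact_mod_cast hd
  set j : ℤ := ⌊x * d⌋ with hj
  set e : ℤ := ⌊((j : ℤ) : ℝ) / d⌋ with he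
  have h1 : (j : ℝ) ≤ x * d := Int.floor_le _
  have h2 : x * d < j + 1 := Int.lt_floor_add_one _
  have h3 : (e : ℝ) ≤ (j : ℝ) / d := Int.floor_le _
  have h4 : (j : ℝ) / d < e + 1 := Int.lt_floor_add_one _
  have hj1 : (j : ℝ) < d * e + d := by
    have : (j : ℝ) / d < e + 1 := h4
    rw [div_lt_iff₀ hd'] at this
    linarith
  have hj2 : (j : ℤ) + 1 ≤ d * e + d := by
    have : (j : ℤ) < d * e + d := by exact_mod_cast hj1
    omega
  have hj2' : (j : ℝ) + 1 ≤ d * e + d := by exact_mod_cast hj2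
  rw [Int.floor_eq_iff (R := ℝ)]
  constructor
  · calc (e : ℝ) ≤ j / d := h3
      _ ≤ x := by rw [div_le_iff₀ hd']; linarith
  · have : x * d < d * e + d := by linarith
    have := (lt_div_iff₀ hd').2 (by linarith : x * d < ((e:ℝ) + 1) * d)
    calc x = x * d / d := by field_simp
      _ < (e : ℝ) + 1 := by rw [div_lt_iff₀ hd']; nlinarith


set_option maxHeartbeats 1000000 in
lemma chat_cell_bound
    {A : Type*} [MetricSpace A] [CompactSpace A] [MeasurableSpace A] [BorelSpace A]
    (k n : ℕ) (hk : 0 < k) (hn : 0 < n)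
    (a : Fin k → A) (Λ : Fin k → ℝ → ℝ → ℝ)
    (hΛmeas : ∀ i, Measurable fun p : ℝ × ℝ => Λ i p.1 p.2)
    (hΛmem : ∀ i x y, Λ i x y ∈ Set.Icc (0:ℝ) 1)
    (hΛsum : ∀ x y, (∑ i : Fin k, Λ i x y) = 1)
    (hΛconst : ∀ (i : Fin k) (s s' t t' : ℝ), ⌊s * (n:ℝ)⌋ = ⌊s' * (n:ℝ)⌋ →
      ⌊t * (n:ℝ)⌋ = ⌊t' * (n:ℝ)⌋ → Λ i s t = Λ i s' t')
    (φ : A × ℝ × ℝ → ℝ) (hφ : Continuous φ) (t : ℝ) (W : ℝ)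
    (hW : ∀ (b : A) (s s' : ℝ), s ∈ Set.Icc (0:ℝ) 1 → s' ∈ Set.Icc (0:ℝ) 1 →
      |s - s'| ≤ 1 / n → |φ (b, s, t) - φ (b, s', t)| ≤ W)
    (j : ℕ) (hj : j < n) :
    |(∫ s in Ioo ((j:ℝ)/n) (((j:ℝ)+1)/n), φ (a (chatIota k n hk Λ (s, t)), s, t)) -
        ∑ i : Fin k, ∫ s in Ioo ((j:ℝ)/n) (((j:ℝ)+1)/n), φ (a i, s, t) * Λ i s t| ≤ W / n := by
  have hn' : (0:ℝ) < n := by exact_mod_cast hn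
  set u : ℝ := (j:ℝ)/n with hu
  set v : ℝ := ((j:ℝ)+1)/n with hv
  have huv : u < v := by
    rw [hu, hv, div_lt_div_iff₀ hn' hn']; nlinarith
  have hu0 : 0 ≤ u := div_nonneg (Nat.cast_nonneg j) hn'.le
  have hv1 : v ≤ 1 := by
    rw [hv, div_le_one hn']
    have : (j:ℝ) + 1 ≤ n := by exact_mod_cast Nat.succ_le_of_lt hj
    linarith
  have hlen : v - u = 1 / n := by rw [hu, hv]; field_simp; ring
  have hsub : Ioo u v ⊆ Icc (0:ℝ) 1 := fun s hs => ⟨hu0.trans hs.1.le, hs.2.le.trans hv1⟩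
  have hfloorj : ∀ s ∈ Ioo u v, ⌊s * (n:ℝ)⌋ = (j:ℤ) := by
    intro s hs
    have h1 : (j:ℝ) < s * n := by
      have := hs.1; rw [hu, div_lt_iff₀ hn'] at this; linarith
    have h2 : s * n < (j:ℝ) + 1 := by
      have := hs.2; rw [hv, lt_div_iff₀ hn'] at this; linarith
    rw [Int.floor_eq_iff]
    constructor <;> push_cast <;> linarith
  have hfloor_u : ⌊u * (n:ℝ)⌋ = (j:ℤ) := by
    have h : u * n = (j:ℝ) := by rw [hu]; field_simp
    rw [h, Int.floor_natCast]
  -- constant values on the cell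
  have hc : ∀ (i : Fin k), ∀ s ∈ Ioo u v, Λ i s t = Λ i u t := by
    intro i s hs
    exact hΛconst i s u t t (by rw [hfloorj s hs, hfloor_u]) rfl
  have hSc : ∀ (i : ℕ), ∀ s ∈ Ioo u v, chatS Λ i s t = chatS Λ i u t := by
    intro i s hs
    exact Finset.sum_congr rfl fun l _ => hc l s hs
  have hθ : ∀ s ∈ Ioo u v, chatTheta n s = s * n - j := by
    intro s hs
    rw [chatTheta, hfloorj s hs]; norm_num
  -- the pieces
  set E : Fin k → Set ℝ := fun i => Ioo u v ∩ {s | chatIota k n hk Λ (s, t) = i} with hE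
  have hσ0 : ∀ i : ℕ, 0 ≤ chatS Λ i u t := by
    intro i
    have := chatS_mono Λ hΛmem (Nat.zero_le i) u t
    rwa [chatS_zero] at this
  have hσ1 : ∀ i : ℕ, i ≤ k → chatS Λ i u t ≤ 1 := by
    intro i hi
    have := chatS_mono Λ hΛmem hi u t
    rwa [chatS_top Λ hΛsum] at this
  have hEset : ∀ i : Fin k,
      E i = Ioo u v ∩ Ico (((j:ℝ) + chatS Λ (i:ℕ) u t)/n) (((j:ℝ) + chatS Λ ((i:ℕ)+1) u t)/n) := by
    intro i
    rw [hE]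
    ext s
    simp only [mem_inter_iff, mem_setOf_eq, mem_Ioo, mem_Ico]
    constructor
    · rintro ⟨hs, hι⟩
      rw [chatIota_spec hk Λ hΛmem hΛsum (s, t) i] at hι
      simp only at hι
      rw [hSc _ s hs, hSc _ s hs, hθ s hs] at hι
      refine ⟨hs, ?_, ?_⟩
      · rw [div_le_iff₀ hn']; linarith [hι.1]
      · rw [lt_div_iff₀ hn']; linarith [hι.2]
    · rintro ⟨hs, h1, h2⟩
      refine ⟨hs, ?_⟩
      rw [chatIota_spec hk Λ hΛmem hΛsum (s, t) i]
      simp only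
      rw [hSc _ s hs, hSc _ s hs, hθ s hs]
      rw [div_le_iff₀ hn'] at h1
      rw [lt_div_iff₀ hn'] at h2
      constructor <;> linarith
  have hEmeas : ∀ i, MeasurableSet (E i) := by
    intro i
    apply measurableSet_Ioo.inter
    have : Measurable fun s : ℝ => chatIota k n hk Λ (s, t) :=
      (chatIota_measurable hk Λ hΛmeas hΛmem hΛsum).comp (measurable_id.prodMk measurable_const)
    exact this (measurableSet_singleton i)
  have hEvol : ∀ i : Fin k, volume (E i) = ENNReal.ofReal (Λ i u t / n) := by
    intro i
    rw [hEset i]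
    set l := ((j:ℝ) + chatS Λ (i:ℕ) u t)/n with hl
    set r := ((j:ℝ) + chatS Λ ((i:ℕ)+1) u t)/n with hr
    have hul : u ≤ l := by
      rw [hu, hl, div_le_div_iff₀ hn' hn']
      have := hσ0 (i:ℕ); nlinarith
    have hrv : r ≤ v := by
      rw [hv, hr, div_le_div_iff₀ hn' hn']
      have := hσ1 ((i:ℕ)+1) i.isLt; nlinarith
    have key : volume (Ioo u v ∩ Ico l r) = volume (Ico l r) := by
      apply le_antisymm (measure_mono inter_subset_right)
      have hsub2 : Ico l r ⊆ (Ioo u v ∩ Ico l r) ∪ {u} := by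
        intro x hx
        rcases eq_or_lt_of_le (hul.trans hx.1) with h | h
        · exact Or.inr (by simp [← h])
        · exact Or.inl ⟨⟨h, lt_of_lt_of_le hx.2 hrv⟩, hx⟩
      calc volume (Ico l r) ≤ volume ((Ioo u v ∩ Ico l r) ∪ {u}) := measure_mono hsub2
        _ ≤ volume (Ioo u v ∩ Ico l r) + volume ({u} : Set ℝ) := measure_union_le _ _
        _ = volume (Ioo u v ∩ Ico l r) := by rw [Real.volume_singleton, add_zero]
    rw [key, Real.volume_Ico]
    congr 1
    rw [hl, hr, chatS_succ]
    field_simp; ring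
  have hEtoReal : ∀ i : Fin k, (volume (E i)).toReal = Λ i u t / n := by
    intro i
    rw [hEvol i, ENNReal.toReal_ofReal (div_nonneg (hΛmem i u t).1 hn'.le)]
  -- integrability and constants
  have hficont : ∀ i : Fin k, Continuous fun s : ℝ => φ (a i, s, t) := fun i =>
    hφ.comp (continuous_const.prodMk (continuous_id.prodMk continuous_const))
  have hfiint : ∀ i : Fin k, IntegrableOn (fun s => φ (a i, s, t)) (Ioo u v) volume := fun i =>
    ((hficont i).integrableOn_Icc).mono_set Ioo_subset_Icc_self
  have hvolIoo : volume (Ioo u v) = ENNReal.ofReal (1/n) := by rw [Real.volume_Ioo, hlen]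
  have hvolIoo_lt : volume (Ioo u v) < ⊤ := by rw [hvolIoo]; exact ENNReal.ofReal_lt_top
  have hvolE_lt : ∀ i, volume (E i) < ⊤ := fun i =>
    lt_of_le_of_lt (measure_mono inter_subset_left) hvolIoo_lt
  set I : Fin k → ℝ := fun i => ∫ s in Ioo u v, φ (a i, s, t) with hI
  have hcover : Ioo u v = ⋃ i, E i := by
    ext s
    simp only [hE, mem_iUnion, mem_inter_iff, mem_setOf_eq]
    exact ⟨fun hs => ⟨chatIota k n hk Λ (s, t), hs, rfl⟩, fun ⟨i, hi⟩ => hi.1⟩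
  have hdisj : Pairwise (Function.onFun Disjoint E) := by
    intro i i' hii'
    rw [Function.onFun, Set.disjoint_left]
    rintro s ⟨_, h1⟩ ⟨_, h2⟩
    exact hii' (h1.symm.trans h2)
  have hF1int : ∀ i, IntegrableOn
      (fun s => φ (a (chatIota k n hk Λ (s, t)), s, t)) (E i) volume := fun i =>
    IntegrableOn.congr_fun ((hfiint i).mono_set inter_subset_left)
      (fun s hs => by rw [hs.2]) (hEmeas i)
  have hsplit1 : (∫ s in Ioo u v, φ (a (chatIota k n hk Λ (s, t)), s, t)) =
      ∑ i : Fin k, ∫ s in E i, φ (a i, s, t) := by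
    rw [hcover, integral_iUnion_fintype hEmeas hdisj hF1int]
    exact Finset.sum_congr rfl fun i _ =>
      setIntegral_congr_fun (hEmeas i) (fun s hs => by rw [hs.2])
  have hstep2 : ∀ i : Fin k, (∫ s in Ioo u v, φ (a i, s, t) * Λ i s t) = Λ i u t * I i := by
    intro i
    have : EqOn (fun s => φ (a i, s, t) * Λ i s t) (fun s => φ (a i, s, t) * Λ i u t)
        (Ioo u v) := fun s hs => by simp only; rw [hc i s hs]
    rw [setIntegral_congr_fun measurableSet_Ioo this, integral_mul_const, hI, mul_comm]
  have hptw : ∀ i : Fin k, ∀ s ∈ Ioo u v, |φ (a i, s, t) - n * I i| ≤ W := by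
    intro i s hs
    have hconst : (∫ _ in Ioo u v, φ (a i, s, t) ∂(volume : Measure ℝ)) = (1/(n:ℝ)) * φ (a i, s, t) := by
      rw [setIntegral_const, measureReal_def, hvolIoo, ENNReal.toReal_ofReal (by positivity), smul_eq_mul]
    have hsubint : (∫ s' in Ioo u v, (φ (a i, s, t) - φ (a i, s', t))) =
        (1/n) * φ (a i, s, t) - I i := by
      rw [integral_sub (integrableOn_const (C := φ (a i, s, t)) hvolIoo_lt.ne) (hfiint i), hconst, hI]
    have hbound : |∫ s' in Ioo u v, (φ (a i, s, t) - φ (a i, s', t))| ≤ W * (1/n) := by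
      have hb := norm_setIntegral_le_of_norm_le_const_ae' (μ := volume) (s := Ioo u v)
        (f := fun s' => φ (a i, s, t) - φ (a i, s', t)) (C := W) hvolIoo_lt ?_
      · rw [Real.norm_eq_abs] at hb
        rwa [measureReal_def, hvolIoo, ENNReal.toReal_ofReal (by positivity)] at hb
      · apply Filter.Eventually.of_forall
        intro s' hs'
        rw [Real.norm_eq_abs]
        apply hW (a i) s s' (hsub hs) (hsub hs')
        have h1 := hs.1; have h2 := hs.2; have h3 := hs'.1; have h4 := hs'.2
        rw [abs_sub_le_iff]
        constructor <;> linarith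
    have heq : φ (a i, s, t) - n * I i = n * ((1/n) * φ (a i, s, t) - I i) := by
      field_simp
    rw [heq, abs_mul, abs_of_nonneg hn'.le, ← hsubint]
    calc (n:ℝ) * |∫ s' in Ioo u v, (φ (a i, s, t) - φ (a i, s', t))|
        ≤ n * (W * (1/n)) := mul_le_mul_of_nonneg_left hbound hn'.le
      _ = W := by field_simp
  have hperi : ∀ i : Fin k,
      |(∫ s in E i, φ (a i, s, t)) - Λ i u t * I i| ≤ W * (Λ i u t / n) := by
    intro i
    have hEint : IntegrableOn (fun s => φ (a i, s, t)) (E i) volume :=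
      (hfiint i).mono_set inter_subset_left
    have hconstE : (∫ _ in E i, ((n:ℝ) * I i)) = Λ i u t * I i := by
      rw [setIntegral_const, measureReal_def, hEtoReal i, smul_eq_mul]
      field_simp
    have heq : (∫ s in E i, φ (a i, s, t)) - Λ i u t * I i =
        ∫ s in E i, (φ (a i, s, t) - n * I i) := by
      rw [integral_sub hEint (integrableOn_const (C := (n:ℝ) * I i) (hvolE_lt i).ne), hconstE]
    rw [heq]
    have hb := norm_setIntegral_le_of_norm_le_const_ae' (μ := volume) (s := E i)
      (f := fun s => φ (a i, s, t) - n * I i) (C := W) (hvolE_lt i) ?_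
    · rw [Real.norm_eq_abs] at hb
      rwa [measureReal_def, hEtoReal i] at hb
    · exact Filter.Eventually.of_forall fun s hs => by
        rw [Real.norm_eq_abs]; exact hptw i s hs.1
  have hsum_c : ∑ i : Fin k, Λ i u t = 1 := hΛsum u t
  calc |(∫ s in Ioo u v, φ (a (chatIota k n hk Λ (s, t)), s, t)) -
      ∑ i : Fin k, ∫ s in Ioo u v, φ (a i, s, t) * Λ i s t|
      = |∑ i : Fin k, ((∫ s in E i, φ (a i, s, t)) - Λ i u t * I i)| := by
        rw [hsplit1, Finset.sum_sub_distrib]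
        congr 1
        congr 1
        exact Finset.sum_congr rfl fun i _ => hstep2 i
    _ ≤ ∑ i : Fin k, |(∫ s in E i, φ (a i, s, t)) - Λ i u t * I i| :=
        Finset.abs_sum_le_sum_abs _ _
    _ ≤ ∑ i : Fin k, W * (Λ i u t / n) := Finset.sum_le_sum fun i _ => hperi i
    _ = W / n := by
        rw [← Finset.mul_sum, ← Finset.sum_div, hsum_c]
        ring


set_option maxHeartbeats 1000000 in
/-- Chattering lemma: given weights `Λ_i : [0,1]² → [0,1]` summing to one, piecewise
constant on the grid of mesh `1/m` with `m ∣ n`, there is a measurable selector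
`α : [0,1]² → A` with values among the `a_i` such that for every continuous `φ` and
every `t ∈ [0,1]`, the chattering error is at most the modulus of continuity `w_φ(1/n)`. -/
theorem chattering_approximation
    {A : Type*} [MetricSpace A] [CompactSpace A] [MeasurableSpace A] [BorelSpace A]
    (k n m : ℕ) (hk : 0 < k) (hm : 0 < m) (hn : 0 < n) (hmn : m ∣ n)
    (a : Fin k → A)
    (Λ : Fin k → ℝ → ℝ → ℝ)
    (hΛmeas : ∀ i, Measurable fun p : ℝ × ℝ => Λ i p.1 p.2)
    (hΛmem : ∀ i x y, Λ i x y ∈ Set.Icc (0:ℝ) 1)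
    (hΛsum : ∀ x y, (∑ i : Fin k, Λ i x y) = 1)
    (hΛstep : ∀ i x y, Λ i x y = Λ i ((⌊x * m⌋ : ℤ) / m) ((⌊y * m⌋ : ℤ) / m)) :
    ∃ α : ℝ × ℝ → A, Measurable α ∧ (∀ p, ∃ i, α p = a i) ∧
      ∀ φ : A × ℝ × ℝ → ℝ, Continuous φ →
        ∀ t ∈ Set.Icc (0:ℝ) 1,
          |(∫ s in Set.Icc (0:ℝ) 1, φ (α (s, t), s, t)) -
              ∑ i : Fin k, ∫ s in Set.Icc (0:ℝ) 1, φ (a i, s, t) * Λ i s t| ≤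
            sSup { r : ℝ | ∃ p q : A × ℝ × ℝ,
              p.2.1 ∈ Set.Icc (0:ℝ) 1 ∧ p.2.2 ∈ Set.Icc (0:ℝ) 1 ∧
              q.2.1 ∈ Set.Icc (0:ℝ) 1 ∧ q.2.2 ∈ Set.Icc (0:ℝ) 1 ∧
              dist p q ≤ 1 / (n : ℝ) ∧ r = |φ p - φ q| } := by
  have hn' : (0:ℝ) < n := by exact_mod_cast hn
  -- step constancy at scale 1/n
  set d : ℕ := n / m with hdd
  have hd : 0 < d := Nat.div_pos (Nat.le_of_dvd hn hmn) hm
  have hmd : (m:ℝ) * d = n := by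
    rw [hdd]
    exact_mod_cast Nat.mul_div_cancel' hmn
  have key : ∀ x : ℝ, ⌊x * (m:ℝ)⌋ = ⌊((⌊x * (n:ℝ)⌋ : ℤ) : ℝ) / (d:ℝ)⌋ := by
    intro x
    have h := chat_floor_div hd (x * m)
    rwa [mul_assoc, hmd] at h
  have hΛconst : ∀ (i : Fin k) (s s' t t' : ℝ), ⌊s * (n:ℝ)⌋ = ⌊s' * (n:ℝ)⌋ →
      ⌊t * (n:ℝ)⌋ = ⌊t' * (n:ℝ)⌋ → Λ i s t = Λ i s' t' := by
    intro i s s' t t' h1 h2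
    rw [hΛstep i s t, hΛstep i s' t', key s, key s', key t, key t', h1, h2]
  have hιmeas := chatIota_measurable (n := n) hk Λ hΛmeas hΛmem hΛsum
  refine ⟨fun p => a (chatIota k n hk Λ p), measurable_from_top.comp hιmeas,
    fun p => ⟨chatIota k n hk Λ p, rfl⟩, ?_⟩
  intro φ hφ t ht
  set W := sSup { r : ℝ | ∃ p q : A × ℝ × ℝ,
      p.2.1 ∈ Set.Icc (0:ℝ) 1 ∧ p.2.2 ∈ Set.Icc (0:ℝ) 1 ∧
      q.2.1 ∈ Set.Icc (0:ℝ) 1 ∧ q.2.2 ∈ Set.Icc (0:ℝ) 1 ∧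
      dist p q ≤ 1 / (n : ℝ) ∧ r = |φ p - φ q| } with hWdef
  -- compactness facts
  have hK : IsCompact ((univ : Set A) ×ˢ (Icc (0:ℝ) 1 ×ˢ Icc (0:ℝ) 1)) :=
    isCompact_univ.prod (isCompact_Icc.prod isCompact_Icc)
  have hbdd : BddAbove { r : ℝ | ∃ p q : A × ℝ × ℝ,
      p.2.1 ∈ Set.Icc (0:ℝ) 1 ∧ p.2.2 ∈ Set.Icc (0:ℝ) 1 ∧
      q.2.1 ∈ Set.Icc (0:ℝ) 1 ∧ q.2.2 ∈ Set.Icc (0:ℝ) 1 ∧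
      dist p q ≤ 1 / (n : ℝ) ∧ r = |φ p - φ q| } := by
    apply BddAbove.mono (t := (fun q : (A × ℝ × ℝ) × (A × ℝ × ℝ) => |φ q.1 - φ q.2|) ''
      (((univ : Set A) ×ˢ (Icc (0:ℝ) 1 ×ˢ Icc (0:ℝ) 1)) ×ˢ
       ((univ : Set A) ×ˢ (Icc (0:ℝ) 1 ×ˢ Icc (0:ℝ) 1))))
    · rintro r ⟨p, q, h1, h2, h3, h4, -, rfl⟩
      exact ⟨(p, q), ⟨⟨mem_univ _, h1, h2⟩, ⟨mem_univ _, h3, h4⟩⟩, rfl⟩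
    · exact ((hK.prod hK).image
        (((hφ.comp continuous_fst).sub (hφ.comp continuous_snd)).abs)).bddAbove
  have hW : ∀ (b : A) (s s' : ℝ), s ∈ Set.Icc (0:ℝ) 1 → s' ∈ Set.Icc (0:ℝ) 1 →
      |s - s'| ≤ 1 / n → |φ (b, s, t) - φ (b, s', t)| ≤ W := by
    intro b s s' hs hs' hss
    apply le_csSup hbdd
    refine ⟨(b, s, t), (b, s', t), hs, ht, hs', ht, ?_, rfl⟩
    simp only [Prod.dist_eq, dist_self, Real.dist_eq]
    exact max_le (by positivity) (max_le hss (by positivity))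
  -- global bound on φ over the compact set
  obtain ⟨C, hC⟩ := hK.exists_bound_of_continuousOn hφ.continuousOn
  -- integrability
  have hIccfin : volume (Icc (0:ℝ) 1) < ⊤ := by
    rw [Real.volume_Icc]; exact ENNReal.ofReal_lt_top
  have hF1meas : Measurable fun s : ℝ => φ (a (chatIota k n hk Λ (s, t)), s, t) := by
    apply hφ.measurable.comp
    exact ((measurable_from_top.comp (hιmeas.comp
      (measurable_id.prodMk measurable_const))).prodMk
      (measurable_id.prodMk measurable_const))
  have hF1int : IntegrableOn (fun s : ℝ => φ (a (chatIota k n hk Λ (s, t)), s, t))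
      (Icc (0:ℝ) 1) volume := by
    refine ⟨hF1meas.aestronglyMeasurable, HasFiniteIntegral.restrict_of_bounded
      (C := C) hIccfin ?_⟩
    refine (ae_restrict_iff' measurableSet_Icc).2 (Filter.Eventually.of_forall ?_)
    intro s hs
    exact hC _ ⟨mem_univ _, hs, ht⟩
  have hfint : ∀ i : Fin k, IntegrableOn (fun s : ℝ => φ (a i, s, t))
      (Icc (0:ℝ) 1) volume := fun i =>
    (hφ.comp (continuous_const.prodMk (continuous_id.prodMk
      continuous_const))).integrableOn_Icc
  have hF2int : ∀ i : Fin k, IntegrableOn (fun s : ℝ => φ (a i, s, t) * Λ i s t)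
      (Icc (0:ℝ) 1) volume := by
    intro i
    have hmΛ : Measurable fun s : ℝ => Λ i s t :=
      (hΛmeas i).comp (measurable_id.prodMk measurable_const)
    have hb := Integrable.bdd_mul (c := 1) (hfint i)
      (hmΛ.aestronglyMeasurable.restrict)
      (Filter.Eventually.of_forall fun s => by
        rw [Real.norm_eq_abs]
        exact abs_le.2 ⟨by linarith [(hΛmem i s t).1], (hΛmem i s t).2⟩)
    exact hb.congr (Filter.Eventually.of_forall fun s => mul_comm _ _)
  -- splitting the integral into cells
  have hsplit : ∀ F : ℝ → ℝ, IntegrableOn F (Icc (0:ℝ) 1) volume →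
      (∫ s in Icc (0:ℝ) 1, F s) =
        ∑ j ∈ Finset.range n, ∫ s in Ioo ((j:ℝ)/n) (((j:ℝ)+1)/n), F s := by
    intro F hF
    have hsub : ∀ j : ℕ, j < n → Ioc ((j:ℝ)/n) (((j:ℝ)+1)/n) ⊆ Icc (0:ℝ) 1 := by
      intro j hj x hx
      have h1 : (0:ℝ) ≤ (j:ℝ)/n := div_nonneg (Nat.cast_nonneg j) hn'.le
      have h2 : ((j:ℝ)+1)/n ≤ 1 := by
        rw [div_le_one hn']
        have : (j:ℝ) + 1 ≤ n := by exact_mod_cast Nat.succ_le_of_lt hj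
        linarith
      exact ⟨h1.trans hx.1.le, hx.2.trans h2⟩
    have hInt : ∀ j : ℕ, j < n → IntervalIntegrable F volume
        ((fun j : ℕ => (j:ℝ)/n) j) ((fun j : ℕ => (j:ℝ)/n) (j+1)) := by
      intro j hj
      simp only [Nat.cast_add, Nat.cast_one]
      have hle : (j:ℝ)/n ≤ ((j:ℝ)+1)/n := by
        rw [div_le_div_iff₀ hn' hn']
        nlinarith
      rw [intervalIntegrable_iff_integrableOn_Ioc_of_le hle]
      exact hF.mono_set (hsub j hj)
    have h0 : ((0:ℕ):ℝ)/n = 0 := by simp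
    have h1 : ((n:ℕ):ℝ)/n = 1 := by field_simp
    calc (∫ s in Icc (0:ℝ) 1, F s) = ∫ s in Ioc (0:ℝ) 1, F s :=
          integral_Icc_eq_integral_Ioc
      _ = ∫ s in (0:ℝ)..1, F s := (intervalIntegral.integral_of_le zero_le_one).symm
      _ = ∫ s in ((0:ℕ):ℝ)/n..((n:ℕ):ℝ)/n, F s := by rw [h0, h1]
      _ = ∑ j ∈ Finset.range n, ∫ s in ((j:ℕ):ℝ)/n..(((j+1):ℕ):ℝ)/n, F s :=
          (intervalIntegral.sum_integral_adjacent_intervals hInt).symm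
      _ = ∑ j ∈ Finset.range n, ∫ s in Ioo ((j:ℝ)/n) (((j:ℝ)+1)/n), F s := by
          refine Finset.sum_congr rfl fun j hj => ?_
          have hle : (j:ℝ)/n ≤ ((j:ℝ)+1)/n := by
            rw [div_le_div_iff₀ hn' hn']
            nlinarith
          push_cast
          rw [intervalIntegral.integral_of_le hle, integral_Ioc_eq_integral_Ioo]
  -- assemble
  rw [hsplit _ hF1int]
  have h2 : ∀ i : Fin k, (∫ s in Icc (0:ℝ) 1, φ (a i, s, t) * Λ i s t) =
      ∑ j ∈ Finset.range n, ∫ s in Ioo ((j:ℝ)/n) (((j:ℝ)+1)/n),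
        φ (a i, s, t) * Λ i s t := fun i => hsplit _ (hF2int i)
  calc |(∑ j ∈ Finset.range n, ∫ s in Ioo ((j:ℝ)/n) (((j:ℝ)+1)/n),
        φ (a (chatIota k n hk Λ (s, t)), s, t)) -
        ∑ i : Fin k, ∫ s in Icc (0:ℝ) 1, φ (a i, s, t) * Λ i s t|
      = |∑ j ∈ Finset.range n, ((∫ s in Ioo ((j:ℝ)/n) (((j:ℝ)+1)/n),
          φ (a (chatIota k n hk Λ (s, t)), s, t)) -
          ∑ i : Fin k, ∫ s in Ioo ((j:ℝ)/n) (((j:ℝ)+1)/n), φ (a i, s, t) * Λ i s t)| := by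
        rw [Finset.sum_sub_distrib]
        congr 1
        congr 1
        rw [Finset.sum_comm]
        exact Finset.sum_congr rfl fun i _ => h2 i
    _ ≤ ∑ j ∈ Finset.range n, |(∫ s in Ioo ((j:ℝ)/n) (((j:ℝ)+1)/n),
          φ (a (chatIota k n hk Λ (s, t)), s, t)) -
          ∑ i : Fin k, ∫ s in Ioo ((j:ℝ)/n) (((j:ℝ)+1)/n), φ (a i, s, t) * Λ i s t| :=
        Finset.abs_sum_le_sum_abs _ _
    _ ≤ ∑ j ∈ Finset.range n, W / n := Finset.sum_le_sum fun j hj =>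
        chat_cell_bound k n hk hn a Λ hΛmeas hΛmem hΛsum hΛconst φ hφ t W hW j
          (Finset.mem_range.1 hj)
    _ = W := by
        rw [Finset.sum_const, Finset.card_range, nsmul_eq_mul]
        field_simp
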